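/- Let X and Y be disjoint finite sets and let Q = Q(X∪Y). Let P be a weak Y-shrub in Q such that P contains no copy of Λ. Then P is a Y-shrub. -/

import Mathlib

/-- With blue/red coloring `c` (blue = `true`, red = `false`) of the Boolean lattice on a
ground set partitioned into `X ∪ Y`, there is a red `X`-good copy of `Q(X)`: an embedding
`φ` of `Q(X)` with all images red and `φ(A) ∩ X = A` for all `A ⊆ X`. -/
def RedXGoodCopy {V : Type*} [DecidableEq V] (c : Finset V → Bool) (X : Finset V) : Prop :=
  ∃ φ : Finset V → Finset V,
    (∀ A B : Finset V, A ⊆ X → B ⊆ X → (A ⊆ B ↔ φ A ⊆ φ B)) ∧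
    (∀ A : Finset V, A ⊆ X → φ A ∩ X = A) ∧
    (∀ A : Finset V, A ⊆ X → c (φ A) = false)

/-- `S` is an ordered subset of `Y`: a sequence of distinct elements of `Y`
(a vertex of the factorial tree `O(Y)`, ordered by the prefix relation `<+:`). -/
def OrdSubset {V : Type*} (Y : Finset V) (S : List V) : Prop :=
  S.Nodup ∧ ∀ v ∈ S, v ∈ Y

/-- `τ` is a `Y`-good embedding of the factorial tree `O(Y)` into the Boolean lattice:
for ordered subsets `S, T` of `Y`, `S` is a prefix of `T` iff `τ S ⊆ τ T`, and
`τ S ∩ Y` is the underlying set of `S`. Its image is a `Y`-shrub. -/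
def IsShrubMap {V : Type*} [DecidableEq V] (Y : Finset V) (τ : List V → Finset V) : Prop :=
  (∀ S T : List V, OrdSubset Y S → OrdSubset Y T → (S <+: T ↔ τ S ⊆ τ T)) ∧
  (∀ S : List V, OrdSubset Y S → τ S ∩ Y = S.toFinset)

/-- `τ` determines a weak `Y`-shrub: `τ S ∩ Y` is the underlying set of `S` for every
ordered subset `S` of `Y`, and `τ S ⊊ τ T` whenever `S` is a strict prefix of `T`. -/
def IsWeakShrubMap {V : Type*} [DecidableEq V] (Y : Finset V) (τ : List V → Finset V) : Prop :=
  (∀ S T : List V, OrdSubset Y S → OrdSubset Y T → S <+: T → S ≠ T → τ S ⊂ τ T) ∧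
  (∀ S : List V, OrdSubset Y S → τ S ∩ Y = S.toFinset)

/-- There is a monochromatic blue `Y`-shrub (blue = `true`). -/
def BlueYShrub {V : Type*} [DecidableEq V] (c : Finset V → Bool) (Y : Finset V) : Prop :=
  ∃ τ : List V → Finset V, IsShrubMap Y τ ∧ ∀ S : List V, OrdSubset Y S → c (τ S) = true

/-- The coloring `c` admits no blue copy of the poset `Λ`: there are no blue vertices
`A, B, C` with `A ⊂ C`, `B ⊂ C` and `A`, `B` incomparable. -/
def NoBlueLambda {V : Type*} (c : Finset V → Bool) : Prop :=
  ¬ ∃ A B C : Finset V, c A = true ∧ c B = true ∧ c C = true ∧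
      A ⊂ C ∧ B ⊂ C ∧ ¬ A ⊆ B ∧ ¬ B ⊆ A


lemma prefix_trichotomy {V : Type*} : ∀ (S T : List V), S <+: T ∨ T <+: S ∨
    ∃ R s t, s ≠ t ∧ (R ++ [s]) <+: S ∧ (R ++ [t]) <+: T
  | [], T => Or.inl (List.nil_prefix)
  | (a :: S), [] => Or.inr (Or.inl List.nil_prefix)
  | (a :: S), (b :: T) => by
    by_cases h : a = b
    · subst h
      rcases prefix_trichotomy S T with h | h | ⟨R, s, t, hst, hS, hT⟩
      · exact Or.inl (by obtain ⟨w, hw⟩ := h; exact ⟨w, by simp [← hw]⟩)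
      · exact Or.inr (Or.inl (by obtain ⟨w, hw⟩ := h; exact ⟨w, by simp [← hw]⟩))
      · refine Or.inr (Or.inr ⟨a :: R, s, t, hst, ?_, ?_⟩)
        · obtain ⟨w, hw⟩ := hS; exact ⟨w, by simp [← hw]⟩
        · obtain ⟨w, hw⟩ := hT; exact ⟨w, by simp [← hw]⟩
    · exact Or.inr (Or.inr ⟨[], a, b, h, ⟨S, rfl⟩, ⟨T, rfl⟩⟩)

lemma ordSubset_of_prefix {V : Type*} {Y : Finset V} {S T : List V}
    (hT : OrdSubset Y T) (h : S <+: T) : OrdSubset Y S :=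
  ⟨hT.1.sublist h.sublist, fun v hv => hT.2 v (h.sublist.mem hv)⟩

/-- Let `X`, `Y` be disjoint sets and let `P` be a weak `Y`-shrub in
`Q(X ∪ Y)` containing no copy of `Λ`. Then `P` is a `Y`-shrub. -/
theorem statement11 {V : Type*} [DecidableEq V] [Fintype V]
    (X Y : Finset V) (hd : Disjoint X Y) (hc : X ∪ Y = Finset.univ)
    (P : Set (Finset V))
    (τ : List V → Finset V) (hweak : IsWeakShrubMap Y τ)
    (him : P = {W : Finset V | ∃ S : List V, OrdSubset Y S ∧ τ S = W})
    (hΛ : ¬ ∃ A B C : Finset V, A ∈ P ∧ B ∈ P ∧ C ∈ P ∧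
        A ⊂ C ∧ B ⊂ C ∧ ¬ A ⊆ B ∧ ¬ B ⊆ A) :
    ∃ τ' : List V → Finset V, IsShrubMap Y τ' ∧
      P = {W : Finset V | ∃ S : List V, OrdSubset Y S ∧ τ' S = W} := by
  refine ⟨τ, ⟨?_, hweak.2⟩, him⟩
  have hmem : ∀ S T : List V, OrdSubset Y S → OrdSubset Y T → τ S ⊆ τ T →
      ∀ v, v ∈ S → v ∈ T := by
    intro S T hS hT hsub v hv
    have h1 : v ∈ τ S ∩ Y := by
      rw [hweak.2 S hS]; exact List.mem_toFinset.mpr hv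
    have h2 : v ∈ τ T ∩ Y :=
      Finset.mem_inter.mpr ⟨hsub (Finset.mem_inter.mp h1).1, (Finset.mem_inter.mp h1).2⟩
    rw [hweak.2 T hT] at h2
    exact List.mem_toFinset.mp h2
  have hfwd : ∀ S T : List V, OrdSubset Y S → OrdSubset Y T → S <+: T → τ S ⊆ τ T := by
    intro S T hS hT hpre
    rcases eq_or_ne S T with rfl | hne
    · exact subset_rfl
    · exact (hweak.1 S T hS hT hpre hne).subset
  intro S T hS hT
  refine ⟨fun h => hfwd S T hS hT h, fun hsub => ?_⟩
  rcases prefix_trichotomy S T with h | h | ⟨R, s, t, hst, hS1, hT1⟩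
  · exact h
  · rcases eq_or_ne T S with rfl | hne
    · exact List.prefix_rfl
    · exact absurd (Finset.Subset.antisymm hsub (hweak.1 T S hT hS h hne).subset).symm
        (hweak.1 T S hT hS h hne).ne
  · exfalso
    set S₁ := R ++ [s] with hS₁def
    set T₁ := R ++ [t] with hT₁def
    have hS₁ : OrdSubset Y S₁ := ordSubset_of_prefix hS hS1
    have hT₁ : OrdSubset Y T₁ := ordSubset_of_prefix hT hT1
    have hsR : s ∉ R := by
      have := hS₁.1
      rw [hS₁def, List.nodup_append] at this
      intro hmem; exact this.2.2 s hmem s (List.mem_singleton_self s) rfl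
    have htR : t ∉ R := by
      have := hT₁.1
      rw [hT₁def, List.nodup_append] at this
      intro hmem; exact this.2.2 t hmem t (List.mem_singleton_self t) rfl
    have hsS₁ : s ∈ S₁ := by simp [hS₁def]
    have htT₁ : t ∈ T₁ := by simp [hT₁def]
    have hAC : τ S₁ ⊆ τ T := (hfwd S₁ S hS₁ hS hS1).trans hsub
    have hAne : τ S₁ ≠ τ T := by
      intro heq
      have : t ∈ S₁ := hmem T S₁ hT hS₁ (le_of_eq heq.symm) t
        (hmem T₁ T hT₁ hT (hfwd T₁ T hT₁ hT hT1) t htT₁)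
      rw [hS₁def] at this
      rcases List.mem_append.mp this with h | h
      · exact htR h
      · exact hst (List.mem_singleton.mp h).symm
    have hBC : τ T₁ ⊂ τ T := by
      refine hweak.1 T₁ T hT₁ hT hT1 ?_
      intro heq
      have hsT : s ∈ T := hmem S T hS hT hsub s (hS1.sublist.mem hsS₁)
      rw [← heq, hT₁def] at hsT
      rcases List.mem_append.mp hsT with h | h
      · exact hsR h
      · exact hst (List.mem_singleton.mp h)
    have hnAB : ¬ τ S₁ ⊆ τ T₁ := by
      intro hab
      have : s ∈ T₁ := hmem S₁ T₁ hS₁ hT₁ hab s hsS₁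
      rw [hT₁def] at this
      rcases List.mem_append.mp this with h | h
      · exact hsR h
      · exact hst (List.mem_singleton.mp h)
    have hnBA : ¬ τ T₁ ⊆ τ S₁ := by
      intro hba
      have : t ∈ S₁ := hmem T₁ S₁ hT₁ hS₁ hba t htT₁
      rw [hS₁def] at this
      rcases List.mem_append.mp this with h | h
      · exact htR h
      · exact hst (List.mem_singleton.mp h).symm
    exact hΛ ⟨τ S₁, τ T₁, τ T,
      him ▸ ⟨S₁, hS₁, rfl⟩, him ▸ ⟨T₁, hT₁, rfl⟩, him ▸ ⟨T, hT, rfl⟩,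
      lt_of_le_of_ne hAC hAne, hBC, hnAB, hnBA⟩
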